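/- arXiv:1212.1414 — 2 statements merged into one kernel-verified Lean document; each statement's English description precedes it below -/
import Mathlib

section
/- Modified fundamental theorem of Riemann integration (Botsko): if g : [a,b] → ℝ is continuous, has a right derivative g₊′(x) at every point of [a,b), and g₊′ is Riemann integrable on [a,b], then g(b) − g(a) = ∫_a^b g₊′(x) dx. -/
open Set

/-- Botsko: if `g` is continuous on `[a,b]`, has a right derivative
`g'(x)` at every point of `[a,b)`, and `g'` is (Riemann, hence interval)
integrable on `[a,b]`, then `g(b) − g(a) = ∫_a^b g'`. -/
theorem botsko_ftc (g g' : ℝ → ℝ) (a b : ℝ) (hab : a < b)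
    (hg : ContinuousOn g (Set.Icc a b))
    (hg' : ∀ x ∈ Set.Ico a b, HasDerivWithinAt g (g' x) (Set.Ici x) x)
    (hint : IntervalIntegrable g' MeasureTheory.volume a b) :
    g b - g a = ∫ x in a..b, g' x := by
  symm
  apply intervalIntegral.integral_eq_sub_of_hasDeriv_right
  · rwa [uIcc_of_le hab.le]
  · intro x hx
    rw [min_eq_left hab.le, max_eq_right hab.le] at hx
    exact (hg' x ⟨hx.1.le, hx.2⟩).mono Ioi_subset_Ici_self
  · exact hint
end

section
/- If a causal functional F : ℝ≥0 × Ω → ℝ is continuous with respect to the Dupire pseudo-metric d_Dupire((t,ω),(t̄,ω̄)) = |t − t̄| + sup_{s ≤ t∨t̄} |ω(s∧t) − ω̄(s∧t̄)|, and ω is a continuous path, then for every sequence of partitions (π(n)) converging to the identity, F(t, ω^{π(n)}) → F(t, ω) uniformly for t in compact intervals. -/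
open scoped NNReal
open Filter Topology Set

noncomputable section

/-- The space of paths `ℝ≥0 → ℝ^d`. -/
abbrev PathD (d : ℕ) := ℝ≥0 → (Fin d → ℝ)

/-- Càdlàg: right-continuous with left limits. -/
def Cadlag {d : ℕ} (ω : PathD d) : Prop :=
  (∀ t, ContinuousWithinAt ω (Set.Ici t) t) ∧
  (∀ t : ℝ≥0, 0 < t → ∃ l, Filter.Tendsto ω (nhdsWithin t (Set.Iio t)) (nhds l))

/-- The stopped path `ω_{∧t}(s) = ω(s ∧ t)`. -/
def stopped {d : ℕ} (ω : PathD d) (t : ℝ≥0) : PathD d := fun s => ω (min s t)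

/-- The perturbed path `ω^{t,r}(s) = ω(s ∧ t) + r·1_{s ≥ t}`. -/
def perturb {d : ℕ} (ω : PathD d) (t : ℝ≥0) (r : Fin d → ℝ) : PathD d :=
  fun s => ω (min s t) + if t ≤ s then r else 0

/-- Index of the nearest partition point to the left of `t`. -/
def lastIdx (π : ℕ → ℝ≥0) (t : ℝ≥0) : ℕ := sSup {k | π k ≤ t}

/-- The piecewise constant approximation `ω^π` of `ω` along the partition `π`:
`ω^π(t) = ω(0) + Σ_k (ω(t_k) − ω(t_{k-1}))·1_{t ≥ t_k}`, equivalently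
`ω^π(t) = ω(t_k)` for `t ∈ [t_k, t_{k+1})`. -/
def pcApprox {d : ℕ} (π : ℕ → ℝ≥0) (ω : PathD d) : PathD d :=
  fun t => ω (π (lastIdx π t))

/-- if a causal functional `F` is (uniformly on compacts)
continuous with respect to the Dupire pseudo-metric
`d((t,ω),(t̄,ω̄)) = |t − t̄| + sup_s |ω(s∧t) − ω̄(s∧t̄)|` and `ω` is a continuous
path, then `F(t, ω^{π(n)}) → F(t, ω)` uniformly on compact time intervals, for
every sequence of partitions converging to the identity. -/
theorem dupire_continuous_regular {d : ℕ} (F : ℝ≥0 → PathD d → ℝ)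
    (hFcausal : ∀ (t : ℝ≥0) (ω : PathD d), F t (stopped ω t) = F t ω)
    (hFcont : ∀ T : ℝ≥0, ∀ ε : ℝ, 0 < ε → ∃ δ : ℝ, 0 < δ ∧
      ∀ t tb : ℝ≥0, t ≤ T → tb ≤ T → ∀ ω ωb : PathD d,
        |(t : ℝ) - (tb : ℝ)| < δ → (∀ s, ‖stopped ω t s - stopped ωb tb s‖ < δ) →
          |F t ω - F tb ωb| < ε)
    (ω : PathD d) (hω : Continuous ω)
    (π : ℕ → ℕ → ℝ≥0)
    (hπ0 : ∀ n, π n 0 = 0) (hπmono : ∀ n, Monotone (π n))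
    (hπtop : ∀ n, Filter.Tendsto (π n) Filter.atTop Filter.atTop)
    (hmesh : ∀ ε : ℝ, 0 < ε → ∃ N, ∀ n ≥ N, ∀ k, (π n (k + 1) : ℝ) - (π n k : ℝ) ≤ ε) :
    ∀ T : ℝ≥0, TendstoUniformlyOn (fun n t => F t (pcApprox (π n) ω))
      (fun t => F t ω) Filter.atTop (Set.Iic T) := by
  intro T
  rw [Metric.tendstoUniformlyOn_iff]
  intro ε hε
  obtain ⟨δ, hδ, hF⟩ := hFcont T ε hε
  have huc : UniformContinuousOn ω (Set.Icc (0:ℝ≥0) T) :=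
    (isCompact_Icc).uniformContinuousOn_of_continuous hω.continuousOn
  rw [Metric.uniformContinuousOn_iff] at huc
  obtain ⟨η, hη, hucη⟩ := huc δ hδ
  obtain ⟨N, hN⟩ := hmesh (η/2) (by positivity)
  rw [Filter.eventually_atTop]
  refine ⟨N, fun n hn t ht => ?_⟩
  have key : ∀ s : ℝ≥0, ‖stopped (pcApprox (π n) ω) t s - stopped ω t s‖ < δ := by
    intro s
    set u := min s t with hu
    have hut : u ≤ T := le_trans (min_le_right _ _) ht
    set S := {k | π n k ≤ u} with hS
    have h0 : 0 ∈ S := by simp [hS, hπ0 n]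
    have hbdd : BddAbove S := by
      obtain ⟨M, hM⟩ := Filter.eventually_atTop.mp ((hπtop n).eventually_ge_atTop (u + 1))
      refine ⟨M, fun k hk => ?_⟩
      by_contra hkM
      push_neg at hkM
      have h1 : u + 1 ≤ π n k := hM k hkM.le
      have h2 : π n k ≤ u := hk
      have : u + 1 ≤ u := h1.trans h2
      simp at this
    set K := lastIdx (π n) u with hK
    have hKmem : π n K ≤ u := Nat.sSup_mem ⟨0, h0⟩ hbdd
    have hK1 : u < π n (K + 1) := by
      by_contra h
      push_neg at h
      have : K + 1 ≤ K := le_csSup hbdd (by exact h : (K+1) ∈ S)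
      omega
    have hdist : dist (π n K) u < η := by
      rw [NNReal.dist_eq]
      have h1 : (u : ℝ) - π n K ≤ π n (K + 1) - π n K := by
        have := hK1.le
        have : (u : ℝ) ≤ π n (K + 1) := by exact_mod_cast hK1.le
        linarith
      have h2 : (π n (K + 1) : ℝ) - π n K ≤ η / 2 := hN n hn K
      have h3 : (π n K : ℝ) ≤ u := by exact_mod_cast hKmem
      rw [abs_sub_comm, abs_of_nonneg (by linarith)]
      linarith
    have hmemK : π n K ∈ Set.Icc (0:ℝ≥0) T := ⟨zero_le, hKmem.trans hut⟩
    have hmemu : u ∈ Set.Icc (0:ℝ≥0) T := ⟨zero_le, hut⟩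
    have := hucη (π n K) hmemK u hmemu hdist
    rw [dist_eq_norm] at this
    simpa [stopped, pcApprox, ← hK] using this
  have := hF t t ht ht (pcApprox (π n) ω) ω (by simpa using hδ) key
  rw [Real.dist_eq, abs_sub_comm]
  exact this
end
end
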